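/- If C_h(X) is separable for a Tychonoff space X, then X has a π-network consisting of I-sets, i.e. for every nonempty open set U ⊆ X there exists a continuous function f : X → ℝ such that f(U) contains a nontrivial closed interval [a,b]. -/

import Mathlib

open Set Filter Topology Function

noncomputable section OPTAux

/-- Binary value of a 0-1 sequence. -/
noncomputable def bval (σ : ℕ → Bool) : ℝ :=
  ∑' n, if σ n then ((2 : ℝ)⁻¹) ^ (n + 1) else 0

lemma bval_continuous : Continuous bval := by
  apply continuous_tsum (u := fun n => ((2 : ℝ)⁻¹) ^ (n + 1))
  · intro n
    exact (continuous_of_discreteTopology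
      (f := fun b : Bool => if b then ((2 : ℝ)⁻¹) ^ (n + 1) else 0)).comp (continuous_apply n)
  · have : Summable (fun n : ℕ => ((2 : ℝ)⁻¹) ^ n * 2⁻¹) :=
      (summable_geometric_of_lt_one (by norm_num) (by norm_num)).mul_right _
    simpa [pow_succ] using this
  · intro n σ
    rcases Bool.dichotomy (σ n) with h | h <;> simp [h] <;> positivity

lemma exists_bval {t : ℝ} (ht0 : 0 ≤ t) (ht1 : t < 1) : ∃ σ : ℕ → Bool, bval σ = t := by
  classical
  set d : ℕ → ℤ := fun n => ⌊t * 2 ^ (n + 1)⌋ - 2 * ⌊t * 2 ^ n⌋ with hd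
  have hd01 : ∀ n, d n = 0 ∨ d n = 1 := by
    intro n
    have hfl : ((⌊t * 2 ^ n⌋ : ℝ)) ≤ t * 2 ^ n := Int.floor_le _
    have hfu : t * 2 ^ n < ⌊t * 2 ^ n⌋ + 1 := Int.lt_floor_add_one _
    have h1 : 2 * ⌊t * 2 ^ n⌋ ≤ ⌊t * 2 ^ (n + 1)⌋ := by
      apply Int.le_floor.2
      push_cast
      rw [pow_succ]
      nlinarith
    have h2 : ⌊t * 2 ^ (n + 1)⌋ < 2 * ⌊t * 2 ^ n⌋ + 2 := by
      apply Int.floor_lt.2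
      push_cast
      rw [pow_succ]
      nlinarith
    simp only [hd]
    omega
  refine ⟨fun n => decide (d n = 1), ?_⟩
  have hterm : ∀ n, (if (decide (d n = 1) : Bool) then ((2 : ℝ)⁻¹) ^ (n + 1) else 0)
      = (d n : ℝ) * ((2 : ℝ)⁻¹) ^ (n + 1) := by
    intro n
    rcases hd01 n with h | h <;> simp [h]
  have hstep : ∀ i : ℕ, (d i : ℝ) * ((2 : ℝ)⁻¹) ^ (i + 1)
      = ((⌊t * 2 ^ (i + 1)⌋ : ℝ)) / 2 ^ (i + 1) - ((⌊t * 2 ^ i⌋ : ℝ)) / 2 ^ i := by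
    intro i
    have h2 : (2 : ℝ) ^ i ≠ 0 := by positivity
    have h2' : (2 : ℝ) ^ (i + 1) ≠ 0 := by positivity
    rw [hd]
    push_cast
    field_simp
    have h3 : ((1:ℝ)/2)^i * 2^i = 1 := by rw [← mul_pow]; norm_num
    linear_combination ((⌊t * 2 ^ (i + 1)⌋ : ℝ) - (⌊t * 2 ^ i⌋ : ℝ) * 2) * 2^i * h3
  have hfloor0 : (⌊t * 2 ^ (0 : ℕ)⌋ : ℝ) = 0 := by
    norm_num
    exact ⟨ht0, ht1⟩
  have hpartial : ∀ m : ℕ,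
      (∑ i ∈ Finset.range m, (if (decide (d i = 1) : Bool) then ((2 : ℝ)⁻¹) ^ (i + 1) else 0))
        = ((⌊t * 2 ^ m⌋ : ℝ)) / 2 ^ m := by
    intro m
    have := Finset.sum_range_sub (fun i : ℕ => ((⌊t * 2 ^ i⌋ : ℝ)) / 2 ^ i) m
    calc (∑ i ∈ Finset.range m, (if (decide (d i = 1) : Bool) then ((2 : ℝ)⁻¹) ^ (i + 1) else 0))
        = ∑ i ∈ Finset.range m, (((⌊t * 2 ^ (i + 1)⌋ : ℝ)) / 2 ^ (i + 1)
            - ((⌊t * 2 ^ i⌋ : ℝ)) / 2 ^ i) := by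
          exact Finset.sum_congr rfl fun i _ => by rw [hterm, hstep]
      _ = ((⌊t * 2 ^ m⌋ : ℝ)) / 2 ^ m - ((⌊t * 2 ^ (0 : ℕ)⌋ : ℝ)) / 2 ^ (0 : ℕ) := this
      _ = ((⌊t * 2 ^ m⌋ : ℝ)) / 2 ^ m := by rw [hfloor0]; norm_num
  have htendsto : Tendsto (fun m : ℕ => ((⌊t * 2 ^ m⌋ : ℝ)) / 2 ^ m) atTop (𝓝 t) := by
    have hlow : ∀ m : ℕ, t - ((2 : ℝ)⁻¹) ^ m ≤ ((⌊t * 2 ^ m⌋ : ℝ)) / 2 ^ m := by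
      intro m
      have h2 : (0 : ℝ) < 2 ^ m := by positivity
      have := Int.lt_floor_add_one (t * 2 ^ m)
      rw [sub_le_iff_le_add, div_add' _ _ _ h2.ne', le_div_iff₀ h2]
      have : ((2 : ℝ)⁻¹) ^ m * 2 ^ m = 1 := by
        rw [← mul_pow]; norm_num
      nlinarith [Int.lt_floor_add_one (t * 2 ^ m)]
    have hup : ∀ m : ℕ, ((⌊t * 2 ^ m⌋ : ℝ)) / 2 ^ m ≤ t := by
      intro m
      have h2 : (0 : ℝ) < 2 ^ m := by positivity
      rw [div_le_iff₀ h2]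
      exact Int.floor_le _
    have hl : Tendsto (fun m : ℕ => t - ((2 : ℝ)⁻¹) ^ m) atTop (𝓝 t) := by
      have := tendsto_pow_atTop_nhds_zero_of_lt_one (r := (2 : ℝ)⁻¹) (by norm_num) (by norm_num)
      simpa using tendsto_const_nhds.sub this
    exact tendsto_of_tendsto_of_tendsto_of_le_of_le hl tendsto_const_nhds hlow hup
  have hnonneg : ∀ i, 0 ≤ (if (decide (d i = 1) : Bool) then ((2 : ℝ)⁻¹) ^ (i + 1) else 0) := by
    intro i
    split <;> positivity
  have hsum : HasSum (fun i => if (decide (d i = 1) : Bool) then ((2 : ℝ)⁻¹) ^ (i + 1) else 0) t := by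
    rw [hasSum_iff_tendsto_nat_of_nonneg hnonneg]
    simpa only [hpartial] using htendsto
  exact hsum.tsum_eq

/-- Merge sequence `b` into the even coordinates and `τ` into the odd coordinates. -/
def bmerge (b τ : ℕ → Bool) : ℕ → Bool := fun n => if n % 2 = 0 then b (n / 2) else τ (n / 2)

lemma bmerge_continuous (b : ℕ → Bool) : Continuous (bmerge b) := by
  apply continuous_pi
  intro n
  by_cases h : n % 2 = 0 <;> simp only [bmerge, h, if_true, if_false, reduceIte]
  · exact continuous_const
  · exact continuous_apply _

lemma bmerge_injective (b : ℕ → Bool) : Injective (bmerge b) := by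
  intro τ τ' h
  funext m
  have h1 : (2 * m + 1) % 2 ≠ 0 := by omega
  have h2 : (2 * m + 1) / 2 = m := by omega
  have := congrFun h (2 * m + 1)
  simpa [bmerge, h1, h2] using this

lemma bmerge_even (b τ : ℕ → Bool) : (fun n => bmerge b τ (2 * n)) = b := by
  funext n
  have h1 : (2 * n) % 2 = 0 := by omega
  have h2 : (2 * n) / 2 = n := by omega
  simp [bmerge, h1, h2]

/-- A "Cantor set" in `ℝ`: a continuous injective image of Cantor space. -/
def GoodSet (K : Set ℝ) : Prop :=
  ∃ e : (ℕ → Bool) → ℝ, Continuous e ∧ Injective e ∧ range e = K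

lemma GoodSet.isCompact {K : Set ℝ} (h : GoodSet K) : IsCompact K := by
  obtain ⟨e, hc, -, hr⟩ := h
  exact hr ▸ isCompact_range hc

lemma GoodSet.nonempty {K : Set ℝ} (h : GoodSet K) : K.Nonempty := by
  obtain ⟨e, -, -, hr⟩ := h
  exact hr ▸ range_nonempty e

lemma goodSet_exists : ∃ K : Set ℝ, GoodSet K := by
  have hperf : Perfect (univ : Set ℝ) := by
    constructor
    · exact isClosed_univ
    · intro x _
      rw [accPt_iff_nhds]
      intro V hV
      obtain ⟨ε, hε, hball⟩ := Metric.mem_nhds_iff.1 hV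
      refine ⟨x + ε / 2, ⟨hball ?_, trivial⟩, by linarith⟩
      rw [Metric.mem_ball, Real.dist_eq]
      rw [abs_of_nonneg (by linarith)] <;> linarith
  obtain ⟨e, -, hc, hi⟩ := hperf.exists_nat_bool_injection univ_nonempty
  exact ⟨range e, e, hc, hi, rfl⟩

/-- Key step: if no continuous image of `U` contains an interval, then inside any Cantor set
we can find a Cantor subset disjoint from `f '' U`. -/
lemma goodSet_step {X : Type*} [TopologicalSpace X] (U : Set X)
    (hU : ∀ g : C(X, ℝ), ∀ a b : ℝ, a < b → ¬ Icc a b ⊆ g '' U)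
    (f : C(X, ℝ)) {K : Set ℝ} (hK : GoodSet K) :
    ∃ K', GoodSet K' ∧ K' ⊆ K ∧ ∀ x ∈ U, f x ∉ K' := by
  classical
  obtain ⟨e, hec, hei, her⟩ := hK
  have hmem : ∀ σ, e σ ∈ K := fun σ => her ▸ mem_range_self σ
  -- homeomorphism from Cantor space onto K
  let eK : (ℕ → Bool) → K := fun σ => ⟨e σ, hmem σ⟩
  have heKc : Continuous eK := hec.subtype_mk _
  have heKbij : Function.Bijective eK := by
    constructor
    · intro a b h
      exact hei (congrArg Subtype.val h)
    · rintro ⟨y, hy⟩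
      obtain ⟨σ, hσ⟩ : y ∈ range e := her.symm ▸ hy
      exact ⟨σ, Subtype.ext hσ⟩
  let h : (ℕ → Bool) ≃ₜ K :=
    Continuous.homeoOfEquivCompactToT2 (f := Equiv.ofBijective eK heKbij) heKc
  -- map K → ℝ reading the binary value of even coordinates
  let φ : C(K, ℝ) := ⟨fun k => bval (fun n => (h.symm k : ℕ → Bool) (2 * n)),
    bval_continuous.comp <| (continuous_pi fun n => continuous_apply (2 * n)).comp
      h.symm.continuous⟩
  have hKclosed : IsClosed K := (GoodSet.isCompact ⟨e, hec, hei, her⟩).isClosed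
  obtain ⟨G, hG⟩ := ContinuousMap.exists_restrict_eq hKclosed φ
  have hGK : ∀ (y : ℝ) (hy : y ∈ K), G y = φ ⟨y, hy⟩ := by
    intro y hy
    exact DFunLike.congr_fun hG ⟨y, hy⟩
  -- find a missed value t ∈ [0, 1/2]
  have := hU (G.comp f) 0 2⁻¹ (by norm_num)
  rw [Set.not_subset] at this
  obtain ⟨t, htmem, htnot⟩ := this
  obtain ⟨b, hb⟩ := exists_bval htmem.1 (lt_of_le_of_lt htmem.2 (by norm_num))
  refine ⟨range (e ∘ bmerge b), ⟨e ∘ bmerge b, hec.comp (bmerge_continuous b),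
    hei.comp (bmerge_injective b), rfl⟩, ?_, ?_⟩
  · rintro y ⟨τ, rfl⟩
    exact hmem _
  · rintro x hx ⟨τ, hτ⟩
    apply htnot
    refine ⟨x, hx, ?_⟩
    have hτ' : e (bmerge b τ) = f x := hτ
    have hGfx : G (f x) = t := by
      rw [← hτ']
      rw [hGK _ (hmem _)]
      have hsymm : h.symm ⟨e (bmerge b τ), hmem _⟩ = bmerge b τ := by
        have : h (bmerge b τ) = ⟨e (bmerge b τ), hmem _⟩ := rfl
        rw [← this, Homeomorph.symm_apply_apply]
      show bval (fun n => (h.symm ⟨e (bmerge b τ), hmem _⟩ : ℕ → Bool) (2 * n)) = t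
      rw [hsymm, bmerge_even, hb]
    simpa using hGfx

end OPTAux

/-- The open-point topology on `C(X, ℝ)`. -/
def openPointTopology (X : Type*) [TopologicalSpace X] : TopologicalSpace C(X, ℝ) :=
  TopologicalSpace.generateFrom
    { S | ∃ (U : Set X) (r : ℝ), IsOpen U ∧ S = { f : C(X, ℝ) | ∃ x ∈ U, f x = r } }

/-- If `C_h(X)` is separable for a Tychonoff space `X`, then every nonempty open subset
of `X` is an I-set: some continuous `f : X → ℝ` has `f(U)` containing a nontrivial
closed interval. Hence `X` has a π-network of I-sets. -/
theorem openPoint_separable_pi_network_I_sets (X : Type*) [TopologicalSpace X] [T35Space X]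
    (hsep : @TopologicalSpace.SeparableSpace C(X, ℝ) (openPointTopology X)) :
    ∀ U : Set X, IsOpen U → U.Nonempty →
      ∃ (f : C(X, ℝ)) (a b : ℝ), a < b ∧ Set.Icc a b ⊆ f '' U := by
  classical
  letI : TopologicalSpace C(X, ℝ) := openPointTopology X
  haveI := hsep
  intro U hUopen hUne
  by_contra hcon
  push_neg at hcon
  -- countable dense set
  haveI : Nonempty C(X, ℝ) := ⟨⟨fun _ => 0, continuous_const⟩⟩
  obtain ⟨D, hDc, hDd⟩ := TopologicalSpace.exists_countable_dense C(X, ℝ)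
  obtain ⟨u, hu⟩ := hDc.exists_eq_range hDd.nonempty
  -- build the nested sequence of Cantor sets
  obtain ⟨K₀, hK₀⟩ := goodSet_exists
  have hstep : ∀ (p : {K : Set ℝ // GoodSet K}) (n : ℕ),
      ∃ K', GoodSet K' ∧ K' ⊆ p.1 ∧ ∀ x ∈ U, u n x ∉ K' :=
    fun p n => goodSet_step U hcon (u n) p.2
  choose next hgood hsub hdisj using hstep
  let seq : ℕ → {K : Set ℝ // GoodSet K} := fun n =>
    Nat.rec ⟨K₀, hK₀⟩ (fun n p => ⟨next p n, hgood p n⟩) n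
  have hseq : ∀ n, seq (n + 1) = ⟨next (seq n) n, hgood (seq n) n⟩ := fun n => rfl
  have hTsub : ∀ n, (seq (n + 1)).1 ⊆ (seq n).1 := fun n => hsub (seq n) n
  have hTdisj : ∀ n, ∀ x ∈ U, u n x ∉ (seq (n + 1)).1 := fun n => hdisj (seq n) n
  -- a point in the intersection
  have hne : (⋂ n, (seq n).1).Nonempty := by
    apply IsCompact.nonempty_iInter_of_sequence_nonempty_isCompact_isClosed
    · exact hTsub
    · exact fun n => (seq n).2.nonempty
    · exact (seq 0).2.isCompact
    · exact fun n => (seq n).2.isCompact.isClosed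
  obtain ⟨r, hr⟩ := hne
  have hrmem : ∀ n, r ∈ (seq n).1 := by
    simpa [Set.mem_iInter] using hr
  -- the subbasic open set [U, r]⁻ misses the dense set
  set S : Set C(X, ℝ) := { f : C(X, ℝ) | ∃ x ∈ U, f x = r } with hS
  have hSopen : IsOpen S :=
    TopologicalSpace.GenerateOpen.basic S ⟨U, r, hUopen, rfl⟩
  have hSne : S.Nonempty := by
    obtain ⟨x₀, hx₀⟩ := hUne
    exact ⟨ContinuousMap.const X r, x₀, hx₀, rfl⟩
  obtain ⟨f, hfD, hfS⟩ := hDd.exists_mem_open hSopen hSne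
  rw [hu] at hfD
  obtain ⟨n, rfl⟩ := hfD
  obtain ⟨x, hxU, hxr⟩ := hfS
  exact hTdisj n x hxU (hxr ▸ hrmem (n + 1))
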